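/- arXiv:2003.12006 — 2 statements merged into one kernel-verified Lean document; each statement's English description precedes it below -/
import Mathlib

section
/- Let F : F_2^n → F_2^n be an APN permutation with F∘A = B∘F, where A, B ∈ GL(n,F_2) have order k for a prime k. Then there is no polynomial of the form X^a + X^b + X^c + 1 in F_2[X]/(X^k+1) with a, b, c distinct and nonzero mod k, that is divisible by both the minimal polynomial of A and the minimal polynomial of B, provided there exists g ∈ F_2^n with ord_A(g) = k. -/
/-- For an APN permutation `F` with `F ∘ A = B ∘ F`, `A, B` of prime order `k`, and a
point `g` of `A`-order `k`, there is no quadrinomial `X^a + X^b + X^c + 1`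
(with `a, b, c` distinct and nonzero mod `k`) annihilating both `A` and `B`. -/
theorem stmt_15 (n : ℕ) (F : (Fin n → ZMod 2) → (Fin n → ZMod 2))
    (hbij : Function.Bijective F)
    (hAPN : ∀ α : Fin n → ZMod 2, α ≠ 0 → ∀ β : Fin n → ZMod 2,
      Set.ncard {x : Fin n → ZMod 2 | F x + F (x + α) = β} ≤ 2)
    (A B : Matrix (Fin n) (Fin n) (ZMod 2)) (hA : IsUnit A) (hB : IsUnit B)
    (k : ℕ) (hk : k.Prime) (hordA : orderOf A = k) (hordB : orderOf B = k)
    (hcomm : ∀ x, F (A.mulVec x) = B.mulVec (F x))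
    (g : Fin n → ZMod 2)
    (hg : sInf {i : ℕ | 0 < i ∧ (A ^ i).mulVec g = g} = k) :
    ¬ ∃ a b c : ℕ, a % k ≠ 0 ∧ b % k ≠ 0 ∧ c % k ≠ 0 ∧
      a % k ≠ b % k ∧ a % k ≠ c % k ∧ b % k ≠ c % k ∧
      A ^ a + A ^ b + A ^ c + 1 = 0 ∧ B ^ a + B ^ b + B ^ c + 1 = 0 := by
  rintro ⟨a, b, c, ha, hb, hc, hab, hac, hbc, hEA, hEB⟩
  have hk0 : 0 < k := hk.pos
  -- F (A^i g) = B^i (F g)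
  have hFA : ∀ (i : ℕ) (x : Fin n → ZMod 2),
      F ((A ^ i).mulVec x) = (B ^ i).mulVec (F x) := by
    intro i
    induction i with
    | zero => intro x; simp [Matrix.one_mulVec]
    | succ m ih =>
      intro x
      rw [pow_succ, pow_succ, ← Matrix.mulVec_mulVec, ← Matrix.mulVec_mulVec,
        ih, hcomm]
  -- fixed points of small powers
  have hfix : ∀ m : ℕ, 0 < m → m < k → (A ^ m).mulVec g ≠ g := by
    intro m h1 h2 h3
    have : k ≤ m := hg ▸ Nat.sInf_le ⟨h1, h3⟩
    omega
  have hAk : (A ^ k).mulVec g = g := by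
    rw [← hordA, pow_orderOf_eq_one, Matrix.one_mulVec]
  have hred : ∀ i : ℕ, (A ^ i).mulVec g = (A ^ (i % k)).mulVec g := by
    intro i
    rw [← hordA, pow_mod_orderOf]
  -- distinctness of the orbit points
  have hneq : ∀ i j : ℕ, i % k ≠ j % k →
      (A ^ i).mulVec g ≠ (A ^ j).mulVec g := by
    intro i j hij heq
    rw [hred i, hred j] at heq
    have hik : i % k < k := Nat.mod_lt _ hk0
    have hjk : j % k < k := Nat.mod_lt _ hk0
    have heq2 : (A ^ (k - j % k + i % k)).mulVec g = g := by
      rw [pow_add, ← Matrix.mulVec_mulVec, heq, Matrix.mulVec_mulVec,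
        ← pow_add]
      have : k - j % k + j % k = k := by omega
      rw [this, hAk]
    rw [hred] at heq2
    refine hfix _ ?_ (Nat.mod_lt _ hk0) heq2
    have : (k - j % k + i % k) % k ≠ 0 := by
      intro h0
      have hlt : k - j % k + i % k < 2 * k := by omega
      have hpos : 0 < k - j % k + i % k := by omega
      rcases Nat.lt_or_ge (k - j % k + i % k) k with h | h
      · rw [Nat.mod_eq_of_lt h] at h0; omega
      · have : k - j % k + i % k - k < k := by omega
        have hm : (k - j % k + i % k) % k = k - j % k + i % k - k := by
          rw [Nat.mod_eq_sub_mod h, Nat.mod_eq_of_lt this]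
        omega
    omega
  have hne : ∀ i : ℕ, i % k ≠ 0 → (A ^ i).mulVec g ≠ g := by
    intro i hi
    have := hneq i 0 (by simpa using hi)
    simpa [Matrix.one_mulVec] using this
  -- abbreviations
  set x1 := (A ^ a).mulVec g with hx1
  set x2 := (A ^ b).mulVec g with hx2
  set x3 := (A ^ c).mulVec g with hx3
  -- pointwise char-two arithmetic helpers
  have key4 : ∀ u v w z : Fin n → ZMod 2, u + v + w + z = 0 → u + v = w + z := by
    intro u v w z h
    funext i
    have hi : u i + v i + w i + z i = 0 := congrFun h i
    have : ∀ p q r s : ZMod 2, p + q + r + s = 0 → p + q = r + s := by decide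
    exact this _ _ _ _ hi
  have cancel : ∀ u v : Fin n → ZMod 2, u + (u + v) = v := by
    intro u v
    funext i
    have : ∀ p q : ZMod 2, p + (p + q) = q := by decide
    exact this _ _
  -- linear identity : x1 + x2 = x3 + g
  have hlin : x1 + x2 = x3 + g := by
    apply key4
    have := congrArg (fun M : Matrix (Fin n) (Fin n) (ZMod 2) => M.mulVec g) hEA
    simpa [Matrix.add_mulVec, Matrix.one_mulVec, Matrix.zero_mulVec] using this
  -- value identity : F x1 + F x2 = F x3 + F g
  have hval : F x1 + F x2 = F x3 + F g := by
    rw [hx1, hx2, hx3, hFA, hFA, hFA]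
    apply key4
    have := congrArg (fun M : Matrix (Fin n) (Fin n) (ZMod 2) => M.mulVec (F g)) hEB
    simpa [Matrix.add_mulVec, Matrix.one_mulVec, Matrix.zero_mulVec] using this
  set α := x1 + x2 with hα
  set β := F x1 + F x2 with hβ
  have hα3 : α = x3 + g := hlin
  have hαne : α ≠ 0 := by
    intro h0
    apply hne c hc
    have : x3 + (x3 + g) = x3 + 0 := by rw [← hα3, h0]
    rw [cancel, add_zero] at this
    exact this.symm
  -- the four solutions
  have hmem1 : x1 ∈ {x : Fin n → ZMod 2 | F x + F (x + α) = β} := by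
    show F x1 + F (x1 + α) = β
    rw [hα, cancel]
  have hmem2 : x2 ∈ {x : Fin n → ZMod 2 | F x + F (x + α) = β} := by
    show F x2 + F (x2 + α) = β
    have : x2 + α = x1 := by rw [hα, add_comm x1 x2, cancel]
    rw [this, hβ, add_comm]
  have hmem3 : x3 ∈ {x : Fin n → ZMod 2 | F x + F (x + α) = β} := by
    show F x3 + F (x3 + α) = β
    have : x3 + α = g := by rw [hα3, cancel]
    rw [this]
    exact hval.symm
  have hmemg : g ∈ {x : Fin n → ZMod 2 | F x + F (x + α) = β} := by
    show F g + F (g + α) = β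
    have : g + α = x3 := by rw [hα3, add_comm x3 g, cancel]
    rw [this, hval]
    exact add_comm _ _
  -- pairwise distinct
  have d12 : x1 ≠ x2 := hneq a b hab
  have d13 : x1 ≠ x3 := hneq a c hac
  have d23 : x2 ≠ x3 := hneq b c hbc
  have d1g : x1 ≠ g := hne a ha
  have d2g : x2 ≠ g := hne b hb
  have d3g : x3 ≠ g := hne c hc
  have hsub : ({g, x3, x1, x2} : Set (Fin n → ZMod 2)) ⊆
      {x : Fin n → ZMod 2 | F x + F (x + α) = β} := by
    intro x hx
    rcases hx with rfl | rfl | rfl | rfl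
    · exact hmemg
    · exact hmem3
    · exact hmem1
    · exact hmem2
  have hcard : ({g, x3, x1, x2} : Set (Fin n → ZMod 2)).ncard = 4 := by
    rw [Set.ncard_insert_of_notMem (by simp [Ne.symm d3g, Ne.symm d1g, Ne.symm d2g]),
      Set.ncard_insert_of_notMem (by simp [d13.symm, d23.symm]),
      Set.ncard_insert_of_notMem (by simp [d12]),
      Set.ncard_singleton]
  have hle : 4 ≤ ({x : Fin n → ZMod 2 | F x + F (x + α) = β}).ncard := by
    rw [← hcard]
    exact Set.ncard_le_ncard hsub (Set.toFinite _)
  have := hAPN α hαne β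
  omega
end

section
/- Suppose A, B ∈ GL(n,F_2) satisfy A^a + A^b = A^c + I and B^a + B^b = B^c + I for integers a, b, c, and F : F_2^n → F_2^n satisfies F∘A = B∘F. If g ∈ F_2^n is such that the four points g, A^a g, A^b g, A^c g are pairwise distinct, then F(A^a g) + F(A^b g) + F(A^c g) + F(g) = 0, and hence F is not APN. -/
/-- If `A^a + A^b = A^c + I`, `B^a + B^b = B^c + I`, `F ∘ A = B ∘ F`, and the four points
`g, A^a g, A^b g, A^c g` are pairwise distinct, then
`F(A^a g) + F(A^b g) + F(A^c g) + F(g) = 0` and `F` is not APN. -/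
theorem stmt_16 (n : ℕ) (F : (Fin n → ZMod 2) → (Fin n → ZMod 2))
    (A B : Matrix (Fin n) (Fin n) (ZMod 2)) (a b c : ℕ)
    (hA : A ^ a + A ^ b = A ^ c + 1) (hB : B ^ a + B ^ b = B ^ c + 1)
    (hcomm : ∀ x, F (A.mulVec x) = B.mulVec (F x))
    (g : Fin n → ZMod 2)
    (hdist : [g, (A ^ a).mulVec g, (A ^ b).mulVec g, (A ^ c).mulVec g].Pairwise (· ≠ ·)) :
    F ((A ^ a).mulVec g) + F ((A ^ b).mulVec g) + F ((A ^ c).mulVec g) + F g = 0 ∧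
    ¬ (∀ α : Fin n → ZMod 2, α ≠ 0 → ∀ β : Fin n → ZMod 2,
      Set.ncard {x : Fin n → ZMod 2 | F x + F (x + α) = β} ≤ 2) := by
  have h2 : ∀ v : Fin n → ZMod 2, v + v = 0 := fun v =>
    funext fun i => CharTwo.add_self_eq_zero (v i)
  set ga := (A ^ a).mulVec g with hga
  set gb := (A ^ b).mulVec g with hgb
  set gc := (A ^ c).mulVec g with hgc
  simp only [List.pairwise_cons, List.mem_cons, List.not_mem_nil, or_false,
    List.mem_singleton, forall_eq_or_imp, forall_eq, List.Pairwise.nil, and_true] at hdist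
  obtain ⟨⟨d1, d2, d3⟩, ⟨d4, d5⟩, d6⟩ := hdist
  have hk : ∀ (k : ℕ) (x : Fin n → ZMod 2),
      F ((A ^ k).mulVec x) = (B ^ k).mulVec (F x) := by
    intro k
    induction k with
    | zero => intro x; simp [Matrix.one_mulVec]
    | succ k ih =>
      intro x
      rw [pow_succ, ← Matrix.mulVec_mulVec, ih, hcomm, Matrix.mulVec_mulVec, ← pow_succ]
  have hFsum : F ga + F gb = F gc + F g := by
    rw [hga, hgb, hgc, hk, hk, hk, ← Matrix.add_mulVec, hB, Matrix.add_mulVec,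
      Matrix.one_mulVec]
  have part1 : F ga + F gb + F gc + F g = 0 := by
    linear_combination hFsum + h2 (F gc) + h2 (F g)
  have E : ga + gb = gc + g := by
    rw [hga, hgb, hgc, ← Matrix.add_mulVec, hA, Matrix.add_mulVec, Matrix.one_mulVec]
  refine ⟨part1, fun hAPN => ?_⟩
  set α := ga + gc with hα
  have hα0 : α ≠ 0 := by
    intro h
    exact d5 (by linear_combination h - h2 gc)
  set β := F ga + F gc with hβ
  have hle := hAPN α hα0 β
  set S : Set (Fin n → ZMod 2) := {x | F x + F (x + α) = β} with hS
  have m1 : g ∈ S := by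
    have hx : g + α = gb := by linear_combination E + h2 g + h2 gc - h2 gb
    show F g + F (g + α) = β
    rw [hx]
    linear_combination part1 - h2 (F ga) - h2 (F gc)
  have m2 : ga ∈ S := by
    have hx : ga + α = gc := by linear_combination h2 ga
    show F ga + F (ga + α) = β
    rw [hx]
  have m3 : gb ∈ S := by
    have hx : gb + α = g := by linear_combination E + h2 gc
    show F gb + F (gb + α) = β
    rw [hx]
    linear_combination part1 - h2 (F ga) - h2 (F gc)
  have m4 : gc ∈ S := by
    have hx : gc + α = ga := by linear_combination h2 gc
    show F gc + F (gc + α) = β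
    rw [hx]
    ring
  have hsub : ({g, ga, gb, gc} : Set (Fin n → ZMod 2)) ⊆ S := by
    intro x hx
    rcases hx with rfl | rfl | rfl | rfl <;> assumption
  have hcard : ({g, ga, gb, gc} : Set (Fin n → ZMod 2)).ncard = 4 := by
    rw [Set.ncard_insert_of_notMem (by simp [d1, d2, d3]),
      Set.ncard_insert_of_notMem (by simp [d4, d5]),
      Set.ncard_pair d6.1]
  have : 4 ≤ S.ncard := hcard ▸ Set.ncard_le_ncard hsub (Set.toFinite S)
  omega
end
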